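/- If E is an infinite-dimensional normed space, then E endowed with the weak topology does not have the Pytkeev property. -/

import Mathlib

open Filter Topology Set



lemma weak_nhds_zero_aux {E : Type*} [NormedAddCommGroup E] [NormedSpace ℝ E]
    {V : Set (WeakSpace ℝ E)} (hV : V ∈ 𝓝 (0 : WeakSpace ℝ E)) :
    ∃ (I : Finset (E →L[ℝ] ℝ)) (ε : ℝ), 0 < ε ∧
      ∀ x : E, (∀ f ∈ I, |f x| < ε) → toWeakSpace ℝ E x ∈ V := by
  classical
  set Φ : WeakSpace ℝ E → (E →L[ℝ] ℝ) → ℝ :=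
    fun x f => f ((toWeakSpace ℝ E).symm x) with hΦ
  have hn : 𝓝 (0 : WeakSpace ℝ E) = Filter.comap Φ (𝓝 (Φ 0)) := nhds_induced Φ 0
  rw [hn, Filter.mem_comap] at hV
  obtain ⟨W, hW, hWV⟩ := hV
  have hΦ0 : Φ 0 = fun _ => (0 : ℝ) := by
    funext f
    simp [hΦ]
  rw [hΦ0, nhds_pi, Filter.mem_pi'] at hW
  obtain ⟨I, t, ht, hts⟩ := hW
  -- get a uniform ε
  have hball : ∀ f : E →L[ℝ] ℝ, ∃ δ : ℝ, 0 < δ ∧ Metric.ball (0:ℝ) δ ⊆ t f := by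
    intro f
    exact Metric.mem_nhds_iff.mp (ht f)
  choose δ hδpos hδsub using hball
  rcases I.eq_empty_or_nonempty with hI | hI
  · refine ⟨I, 1, one_pos, fun x hx => ?_⟩
    apply hWV
    apply hts
    intro f hf
    rw [hI] at hf
    simp at hf
  · refine ⟨I, I.inf' hI δ, ?_, fun x hx => ?_⟩
    · exact (Finset.lt_inf'_iff hI).mpr fun f _ => hδpos f
    · apply hWV
      apply hts
      intro f hf
      apply hδsub f
      simp only [Metric.mem_ball, Real.dist_eq, sub_zero]
      calc |Φ (toWeakSpace ℝ E x) f| = |f x| := by simp [hΦ]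
        _ < I.inf' hI δ := hx f hf
        _ ≤ δ f := Finset.inf'_le _ hf


set_option synthInstance.maxHeartbeats 1000000 in
lemma baire_functional_aux {E : Type*} [NormedAddCommGroup E] [NormedSpace ℝ E]
    (S : ℕ → Set E) (hS : ∀ n (R : ℝ), ∃ x ∈ S n, R < ‖x‖) :
    ∃ f : E →L[ℝ] ℝ, ∀ n, ∃ x ∈ S n, 1 < |f x| := by
  classical
  set F : ℕ → Set (E →L[ℝ] ℝ) := fun n => {f | ∀ x ∈ S n, |f x| ≤ 1} with hF
  have hclosed : ∀ n, IsClosed (F n) := by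
    intro n
    have : F n = ⋂ x ∈ S n, {f : E →L[ℝ] ℝ | |f x| ≤ 1} := by
      ext f; simp [hF]
    rw [this]
    refine isClosed_biInter fun x _ => ?_
    have hc : Continuous fun f : E →L[ℝ] ℝ => |f x| :=
      (ContinuousLinearMap.apply ℝ ℝ x).continuous.abs
    exact isClosed_le hc continuous_const
  have hint : ∀ n, (interior (F n)) = ∅ := by
    intro n
    by_contra hne
    obtain ⟨g, hg⟩ := Set.nonempty_iff_ne_empty.mpr hne
    obtain ⟨r, hr, hball⟩ := Metric.mem_nhds_iff.mp (mem_interior_iff_mem_nhds.mp hg)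
    obtain ⟨x, hxS, hx⟩ := hS n (4 / r)
    have hx0 : x ≠ 0 := by
      intro h0
      rw [h0, norm_zero] at hx
      have : (0:ℝ) < 4 / r := by positivity
      linarith
    obtain ⟨φ, hφnorm, hφx⟩ := exists_dual_vector ℝ x (norm_ne_zero_iff.mpr hx0)
    have hgF : g ∈ F n := hball (Metric.mem_ball_self hr)
    have hhF : g + (r/2) • φ ∈ F n := by
      apply hball
      simp only [Metric.mem_ball, dist_eq_norm, add_sub_cancel_left]
      have hns := norm_smul (r/2) φ
      calc ‖(r/2) • φ‖ = |r/2| * ‖φ‖ := by rw [hns, Real.norm_eq_abs]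
        _ = r/2 := by rw [hφnorm, abs_of_pos (by linarith)]; ring
        _ < r := by linarith
    have h1 : |g x| ≤ 1 := hgF x hxS
    have h2 : |(g + (r/2) • φ) x| ≤ 1 := hhF x hxS
    have h3 : (g + (r/2) • φ) x = g x + (r/2) * ‖x‖ := by
      simp [hφx]
    have h4 : (r/2) * ‖x‖ ≤ 2 := by
      have h5 : |(g + (r/2) • φ) x - g x| = (r/2) * ‖x‖ := by
        rw [h3, add_sub_cancel_left, abs_of_nonneg (by positivity)]
      calc (r/2) * ‖x‖ = |(g + (r/2) • φ) x - g x| := h5.symm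
        _ ≤ |(g + (r/2) • φ) x| + |g x| := abs_sub _ _
        _ ≤ 2 := by linarith
    have h6 : ‖x‖ ≤ 4 / r := by
      rw [le_div_iff₀ hr]
      nlinarith
    linarith
  by_contra hcon
  push_neg at hcon
  have hunion : ⋃ n, F n = univ := by
    ext f
    simp only [mem_iUnion, mem_univ, iff_true]
    obtain ⟨n, hn⟩ := hcon f
    exact ⟨n, hn⟩
  obtain ⟨n, hn⟩ := nonempty_interior_of_iUnion_of_closed hclosed hunion
  rw [hint n] at hn
  exact Set.not_nonempty_empty hn


lemma weird_set_exists {E : Type*} [NormedAddCommGroup E] [NormedSpace ℝ E]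
    (h : ¬ FiniteDimensional ℝ E) :
    ∃ A : Set E, (∀ x ∈ A, 3/4 ≤ ‖x‖) ∧
      (∀ R : ℝ, (A ∩ Metric.closedBall 0 R).Finite) ∧
      (∀ (I : Finset (E →L[ℝ] ℝ)) (ε : ℝ), 0 < ε → ∃ a ∈ A, ∀ f ∈ I, |f a| < ε) := by
  classical
  have hrank : ∀ n : ℕ, ∃ v : Fin n → E, LinearIndependent ℝ v := by
    intro n
    apply exists_linearIndependent_of_le_rank
    have : Cardinal.aleph0 ≤ Module.rank ℝ E := by
      by_contra hlt
      exact h (Module.rank_lt_aleph0_iff.mp (lt_of_not_ge hlt))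
    exact le_trans (le_of_lt (Cardinal.nat_lt_aleph0 n)) this
  set δ : ℕ → ℝ := fun n => (4*((n:ℝ)+1)^2)⁻¹ with hδ
  have hδpos : ∀ n, 0 < δ n := by
    intro n
    have : (0:ℝ) < (n:ℝ)+1 := by positivity
    positivity
  have hδsmall : ∀ n, δ n ≤ 1/4 := by
    intro n
    rw [hδ]
    have h1 : (1:ℝ) ≤ ((n:ℝ)+1)^2 := by
      have : (1:ℝ) ≤ (n:ℝ)+1 := by
        have := Nat.cast_nonneg (α := ℝ) n
        linarith
      nlinarith
    rw [show (1:ℝ)/4 = (4:ℝ)⁻¹ by norm_num]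
    apply inv_anti₀ (by norm_num)
    nlinarith
  have key : ∀ n : ℕ, ∃ N : Set E, N.Finite ∧ (∀ u ∈ N, 1 - δ n ≤ ‖u‖) ∧
      ∀ I : Finset (E →L[ℝ] ℝ), I.card ≤ n → ∃ u ∈ N, ∀ f ∈ I, |f u| ≤ ‖f‖ * δ n := by
    intro n
    obtain ⟨v, hv⟩ := hrank (n+1)
    set W : Submodule ℝ E := Submodule.span ℝ (Set.range v) with hW
    haveI : FiniteDimensional ℝ ↥W := FiniteDimensional.span_of_finite ℝ (Set.finite_range v)
    have hWrank : Module.finrank ℝ ↥W = n + 1 := by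
      rw [hW, finrank_span_eq_card hv, Fintype.card_fin]
    -- compact sphere of W inside E
    have hcomp : IsCompact (Subtype.val '' (Metric.sphere (0:↥W) 1)) :=
      (isCompact_sphere (0:↥W) 1).image continuous_subtype_val
    obtain ⟨t, htfin, htcov⟩ :=
      Metric.totallyBounded_iff.mp hcomp.totallyBounded (δ n) (hδpos n)
    refine ⟨{u ∈ t | 1 - δ n ≤ ‖u‖}, htfin.subset (sep_subset _ _), fun u hu => hu.2, ?_⟩
    intro I hI
    -- find a unit vector in W annihilated by all f ∈ I
    have hninj : ¬ Function.Injective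
        (LinearMap.pi (fun f : I => ((f : E →L[ℝ] ℝ) : E →ₗ[ℝ] ℝ).comp W.subtype)) := by
      intro hinj
      have hle := LinearMap.finrank_le_finrank_of_injective hinj
      rw [hWrank, Module.finrank_pi, Fintype.card_coe] at hle
      omega
    rw [Function.not_injective_iff] at hninj
    obtain ⟨w₁, w₂, hww, hne⟩ := hninj
    set w : ↥W := w₁ - w₂ with hwdef
    have hw0 : w ≠ 0 := sub_ne_zero_of_ne hne
    have hmap : (LinearMap.pi (fun f : I => ((f : E →L[ℝ] ℝ) : E →ₗ[ℝ] ℝ).comp W.subtype)) w = 0 := by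
      rw [hwdef, map_sub, hww, sub_self]
    have hfw : ∀ f ∈ I, f (w : E) = 0 := by
      intro f hf
      have := congrFun hmap (⟨f, hf⟩ : I)
      simpa [LinearMap.pi_apply] using this
    have hwE0 : (w : E) ≠ 0 := fun hc => hw0 (Subtype.coe_injective (by simpa using hc))
    have hwn : ‖(w:E)‖ ≠ 0 := norm_ne_zero_iff.mpr hwE0
    set x : E := ‖(w:E)‖⁻¹ • (w:E) with hx
    have hxnorm : ‖x‖ = 1 := by
      rw [hx, norm_smul, norm_inv, norm_norm, inv_mul_cancel₀ hwn]
    have hxW : x ∈ W := W.smul_mem _ w.2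
    have hxS : x ∈ Subtype.val '' (Metric.sphere (0:↥W) 1) := by
      refine ⟨⟨x, hxW⟩, ?_, rfl⟩
      simp only [Metric.mem_sphere, dist_zero_right]
      rw [show ‖(⟨x, hxW⟩ : ↥W)‖ = ‖x‖ from rfl, hxnorm]
    obtain ⟨u, hu, hudist⟩ := by
      have := htcov hxS
      simpa only [Set.mem_iUnion, exists_prop] using this
    have hdxu : dist x u < δ n := by simpa [Metric.mem_ball] using hudist
    have hun : 1 - δ n ≤ ‖u‖ := by
      have h1 : ‖x‖ - ‖u‖ ≤ ‖x - u‖ := norm_sub_norm_le _ _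
      rw [hxnorm] at h1
      have h2 : ‖x - u‖ = dist x u := (dist_eq_norm x u).symm
      linarith [hdxu]
    refine ⟨u, ⟨hu, hun⟩, ?_⟩
    intro f hf
    have hfx : f x = 0 := by
      rw [hx, map_smul]
      simp [hfw f hf]
    have : |f u| = |f (u - x)| := by rw [map_sub, hfx, sub_zero]
    rw [this]
    calc |f (u - x)| ≤ ‖f‖ * ‖u - x‖ := f.le_opNorm _
      _ ≤ ‖f‖ * δ n := by
          apply mul_le_mul_of_nonneg_left _ (norm_nonneg f)
          rw [← dist_eq_norm, dist_comm]
          exact le_of_lt hdxu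
  choose N hNfin hNnorm hNkey using key
  refine ⟨⋃ (n : ℕ), (fun u => ((n:ℝ)+1) • u) '' N n, ?_, ?_, ?_⟩
  · rintro x hx
    rw [Set.mem_iUnion] at hx
    obtain ⟨n, hn⟩ := hx
    rw [Set.mem_image] at hn
    obtain ⟨u, hu, rfl⟩ := hn
    have h1 : ‖((n:ℝ)+1) • u‖ = ((n:ℝ)+1) * ‖u‖ := by
      rw [norm_smul, Real.norm_eq_abs, abs_of_pos (by positivity)]
    rw [h1]
    have h2 : (3:ℝ)/4 ≤ ‖u‖ := le_trans (by linarith [hδsmall n]) (hNnorm n u hu)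
    have h3 : (1:ℝ) ≤ (n:ℝ)+1 := by
      have := Nat.cast_nonneg (α := ℝ) n; linarith
    nlinarith [norm_nonneg u]
  · intro R
    obtain ⟨n₀, hn₀⟩ := exists_nat_gt (4*R/3)
    apply Set.Finite.subset
      (Set.Finite.biUnion (Set.finite_Iio n₀) (fun n _ => (hNfin n).image (fun u => ((n:ℝ)+1) • u)))
    rintro x ⟨hxA, hxB⟩
    rw [Set.mem_iUnion] at hxA
    obtain ⟨n, hn⟩ := hxA
    rw [Set.mem_image] at hn
    obtain ⟨u, hu, rfl⟩ := hn
    have hnlt : n < n₀ := by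
      by_contra hge
      push_neg at hge
      have h1 : ‖((n:ℝ)+1) • u‖ = ((n:ℝ)+1) * ‖u‖ := by
        rw [norm_smul, Real.norm_eq_abs, abs_of_pos (by positivity)]
      have h2 : (3:ℝ)/4 ≤ ‖u‖ := le_trans (by linarith [hδsmall n]) (hNnorm n u hu)
      have h3 : ‖((n:ℝ)+1) • u‖ ≤ R := by
        simpa [Metric.mem_closedBall, dist_zero_right] using hxB
      have h4 : ((n₀:ℝ)) ≤ (n:ℝ) := Nat.cast_le.mpr hge
      have h5 : ((n:ℝ)+1) * ‖u‖ ≥ ((n:ℝ)+1) * (3/4) := by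
        apply mul_le_mul_of_nonneg_left h2 (by positivity)
      have h6 : 4*R/3 < (n₀:ℝ) := hn₀
      nlinarith
    exact Set.mem_biUnion hnlt ⟨u, hu, rfl⟩
  · intro I ε hε
    set M : ℝ := 1 + (I.sup fun f => ‖f‖₊ : NNReal) with hM
    have hMpos : 0 < M := by
      rw [hM]; positivity
    have hMle : ∀ f ∈ I, ‖f‖ ≤ M := by
      intro f hf
      rw [hM]
      have : ‖f‖₊ ≤ I.sup fun f => ‖f‖₊ := Finset.le_sup hf
      have h2 : (‖f‖₊ : ℝ) ≤ ((I.sup fun f => ‖f‖₊ : NNReal) : ℝ) := NNReal.coe_le_coe.mpr this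
      rw [← coe_nnnorm f]
      linarith
    obtain ⟨n₁, hn₁⟩ := exists_nat_gt (M/(4*ε))
    set n : ℕ := max n₁ I.card with hn
    obtain ⟨u, hu, hfu⟩ := hNkey n I (le_max_right _ _)
    refine ⟨((n:ℝ)+1) • u, Set.mem_iUnion.mpr ⟨n, ⟨u, hu, rfl⟩⟩, ?_⟩
    intro f hf
    have h1 : |f (((n:ℝ)+1) • u)| = ((n:ℝ)+1) * |f u| := by
      rw [map_smul, smul_eq_mul, abs_mul, abs_of_pos (by positivity)]
    rw [h1]
    have h2 : |f u| ≤ M * δ n :=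
      le_trans (hfu f hf) (mul_le_mul_of_nonneg_right (hMle f hf) (le_of_lt (hδpos n)))
    have h3 : ((n:ℝ)+1) * |f u| ≤ ((n:ℝ)+1) * (M * δ n) :=
      mul_le_mul_of_nonneg_left h2 (by positivity)
    have h4 : ((n:ℝ)+1) * (M * δ n) = M / (4*((n:ℝ)+1)) := by
      rw [hδ]
      field_simp
    have h5 : M / (4*((n:ℝ)+1)) < ε := by
      rw [div_lt_iff₀ (by positivity)]
      have h6 : (n₁:ℝ) ≤ (n:ℝ) := Nat.cast_le.mpr (le_max_left _ _)
      have h7 : M/(4*ε) < (n:ℝ)+1 := by linarith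
      calc M = (M/(4*ε)) * (4*ε) := by field_simp
        _ < ((n:ℝ)+1) * (4*ε) := by
            apply mul_lt_mul_of_pos_right h7 (by positivity)
        _ = ε * (4*((n:ℝ)+1)) := by ring
    exact lt_of_le_of_lt (le_of_le_of_eq h3 h4) h5


/-- `X` has the Pytkeev property. -/
def PytkeevSpace (X : Type*) [TopologicalSpace X] : Prop :=
  ∀ (A : Set X) (x : X), x ∈ closure A \ A →
    ∃ S : ℕ → Set X, (∀ n, S n ⊆ A ∧ (S n).Infinite) ∧
      ∀ U ∈ nhds x, ∃ n, S n ⊆ U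

/-- Theorem 1.4: an infinite-dimensional normed space with the weak topology does not have
the Pytkeev property. -/
theorem weak_not_pytkeev_of_infinite_dimensional
    {E : Type*} [NormedAddCommGroup E] [NormedSpace ℝ E]
    (h : ¬ FiniteDimensional ℝ E) :
    ¬ PytkeevSpace (WeakSpace ℝ E) := by
  intro hP
  obtain ⟨A, hA1, hA2, hA3⟩ := weird_set_exists h
  set A' : Set (WeakSpace ℝ E) := toWeakSpace ℝ E '' A with hA'
  have h0cl : (0 : WeakSpace ℝ E) ∈ closure A' := by
    rw [mem_closure_iff_nhds]
    intro V hV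
    obtain ⟨I, ε, hε, hIV⟩ := weak_nhds_zero_aux hV
    obtain ⟨a, haA, ha⟩ := hA3 I ε hε
    refine ⟨toWeakSpace ℝ E a, hIV a fun f hf => ha f hf, ⟨a, haA, rfl⟩⟩
  have h0nA : (0 : WeakSpace ℝ E) ∉ A' := by
    rintro ⟨a, haA, ha0⟩
    have ha0' : a = 0 :=
      (toWeakSpace ℝ E).injective (ha0.trans (map_zero (toWeakSpace ℝ E)).symm)
    rw [ha0'] at haA
    have := hA1 0 haA
    rw [norm_zero] at this
    linarith
  obtain ⟨S, hS1, hS2⟩ := hP A' 0 ⟨h0cl, h0nA⟩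
  set T : ℕ → Set E := fun n => (toWeakSpace ℝ E).symm '' S n with hT
  have hTA : ∀ n, T n ⊆ A := by
    rintro n x ⟨y, hy, rfl⟩
    obtain ⟨a, haA, ha⟩ := (hS1 n).1 hy
    rw [← ha]
    simpa using haA
  have hTunb : ∀ n (R : ℝ), ∃ x ∈ T n, R < ‖x‖ := by
    intro n R
    by_contra hcon
    push_neg at hcon
    have hfin : (T n).Finite := by
      apply (hA2 R).subset
      intro x hx
      refine ⟨hTA n hx, ?_⟩
      rw [Metric.mem_closedBall, dist_zero_right]
      exact hcon x hx
    have hinf : (T n).Infinite :=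
      ((hS1 n).2).image ((toWeakSpace ℝ E).symm.injective.injOn)
    exact hinf hfin
  obtain ⟨f, hf⟩ := baire_functional_aux T hTunb
  set U : Set (WeakSpace ℝ E) :=
    (fun y : WeakSpace ℝ E => f ((toWeakSpace ℝ E).symm y)) ⁻¹' (Metric.ball (0:ℝ) 1) with hU
  have hUopen : IsOpen U := by
    have hc : Continuous fun y : WeakSpace ℝ E => f ((toWeakSpace ℝ E).symm y) :=
      WeakBilin.eval_continuous ((topDualPairing ℝ E).flip) f
    exact Metric.isOpen_ball.preimage hc
  have hU0 : (0 : WeakSpace ℝ E) ∈ U := by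
    rw [hU]
    simp only [Set.mem_preimage, Metric.mem_ball, dist_zero_right]
    have : (toWeakSpace ℝ E).symm (0 : WeakSpace ℝ E) = (0 : E) := map_zero _
    rw [this, map_zero, norm_zero]
    norm_num
  obtain ⟨n, hn⟩ := hS2 U (hUopen.mem_nhds hU0)
  obtain ⟨x, hxT, hx1⟩ := hf n
  obtain ⟨y, hyS, hyx⟩ := hxT
  have hyU := hn hyS
  rw [hU] at hyU
  simp only [Set.mem_preimage, Metric.mem_ball, dist_zero_right, Real.norm_eq_abs] at hyU
  rw [hyx] at hyU
  linarith
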